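/- Let k ≥ 3 be an integer, let ω = exp(2πi/k) ∈ ℂ, and let A be a complex n×n matrix with n ≥ 2 such that rank(A) = 1 and tr(A) = α·ω^j, where α is an integer with α > 3 and j is an integer with 1 < j < k. If α is even, then A is a sum of (α−2)/2 + 2 many (k+1)-potent matrices; if α is odd, then A is a sum of (α−3)/2 + 3 many (k+1)-potent matrices. -/

import Mathlib

open Matrix

private lemma vmv_mul {n : ℕ} (a b c d : Fin n → ℂ) :
    vecMulVec a b * vecMulVec c d = (b ⬝ᵥ c) • vecMulVec a d := by
  ext i j
  simp only [mul_apply, vecMulVec_apply, Matrix.smul_apply, smul_eq_mul, dotProduct]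
  rw [Finset.sum_mul]
  exact Finset.sum_congr rfl fun l _ => by ring

private lemma kpotent_of_sq {n k : ℕ} (M : Matrix (Fin n) (Fin n) ℂ) (c : ℂ)
    (h : M * M = c • M) (hc : c ^ k = 1) : M ^ (k + 1) = M := by
  have key : ∀ m : ℕ, M ^ (m + 1) = c ^ m • M := by
    intro m
    induction m with
    | zero => simp
    | succ m ih => rw [pow_succ, ih, smul_mul_assoc, h, smul_smul, ← pow_succ]
  rw [key k, hc, one_smul]

private lemma rank_one_decomp {n : ℕ} (A : Matrix (Fin n) (Fin n) ℂ)
    (h : A.rank = 1) : ∃ u v : Fin n → ℂ, A = vecMulVec u v := by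
  rw [Matrix.rank] at h
  obtain ⟨u₀, -, hspan⟩ := finrank_eq_one_iff'.mp h
  choose f hf using hspan
  refine ⟨u₀, fun j => f ⟨A *ᵥ Pi.single j 1, ⟨Pi.single j 1, rfl⟩⟩, ?_⟩
  ext i j
  have h2 := congrFun (congrArg Subtype.val (hf ⟨A *ᵥ Pi.single j 1, ⟨Pi.single j 1, rfl⟩⟩)) i
  simp only [Submodule.coe_smul, Pi.smul_apply, smul_eq_mul] at h2
  rw [vecMulVec_apply, mul_comm, h2]
  simp

private lemma decomp_core {n k : ℕ} (τ : ℂ) (hτk : τ ^ k = 1)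
    (A : Matrix (Fin n) (Fin n) ℂ) (u v w x : Fin n → ℂ)
    (hA : A = vecMulVec u v) (t : ℂ) (hvu : v ⬝ᵥ u = t)
    (c : ℂ) (hct : c * t = 1)
    (hvw : v ⬝ᵥ w = 0) (hxu : x ⬝ᵥ u = 0) (hxw : x ⬝ᵥ w = 1)
    (p q : ℕ) (htval : t = (2 * (p : ℂ) + (q : ℂ) + 2) * τ) :
    ∃ E : Fin (p + q + 2) → Matrix (Fin n) (Fin n) ℂ,
      (∀ i, E i ^ (k + 1) = E i) ∧ A = ∑ i, E i := by
  set lc : ℂ := (1 - ((p : ℂ) + (q : ℂ)) * τ * c) / 2 with hlc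
  set mc : ℂ := -(p : ℂ) * τ / 2 with hmc
  set M₁ : Matrix (Fin n) (Fin n) ℂ := vecMulVec (u + w) (lc • v + mc • x) with hM₁
  set M₂ : Matrix (Fin n) (Fin n) ℂ := vecMulVec (u - w) (lc • v - mc • x) with hM₂
  set M₃ : Matrix (Fin n) (Fin n) ℂ := vecMulVec ((τ * c) • u) v with hM₃
  set N : Matrix (Fin n) (Fin n) ℂ :=
    vecMulVec ((τ * c) • u) v + vecMulVec (τ • w) x with hN
  -- key trace identity
  have key : lc * t + mc = τ := by
    have h1 : ((p : ℂ) + (q : ℂ)) * τ * (c * t) = ((p : ℂ) + (q : ℂ)) * τ := by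
      rw [hct, mul_one]
    rw [hlc, hmc]
    linear_combination (1 / 2 : ℂ) * htval - (1 / 2 : ℂ) * h1
  have hM₁sq : M₁ * M₁ = τ • M₁ := by
    rw [hM₁, vmv_mul]
    congr 1
    simp only [add_dotProduct, dotProduct_add, smul_dotProduct, smul_eq_mul,
      hvu, hvw, hxu, hxw]
    linear_combination key
  have hM₂sq : M₂ * M₂ = τ • M₂ := by
    rw [hM₂, vmv_mul]
    congr 1
    simp only [sub_dotProduct, dotProduct_sub, smul_dotProduct, smul_eq_mul,
      hvu, hvw, hxu, hxw]
    linear_combination key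
  have hM₃sq : M₃ * M₃ = τ • M₃ := by
    rw [hM₃, vmv_mul, dotProduct_smul, hvu, smul_eq_mul, mul_assoc, hct, mul_one]
  have hNsq : N * N = τ • N := by
    rw [hN, add_mul, mul_add, mul_add, vmv_mul, vmv_mul, vmv_mul, vmv_mul]
    simp only [dotProduct_smul, smul_eq_mul, hvu, hvw, hxu, hxw, mul_zero, zero_smul,
      add_zero, zero_add, mul_one, smul_add]
    rw [mul_assoc, hct, mul_one]
  -- the family
  set F : ℕ → Matrix (Fin n) (Fin n) ℂ := fun r =>
    if r = 0 then M₁ else if r = 1 then M₂ else if r < q + 2 then M₃ else N with hF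
  refine ⟨fun idx => F (idx : ℕ), fun idx => ?_, ?_⟩
  · rw [hF]
    dsimp only
    split_ifs
    · exact kpotent_of_sq _ τ hM₁sq hτk
    · exact kpotent_of_sq _ τ hM₂sq hτk
    · exact kpotent_of_sq _ τ hM₃sq hτk
    · exact kpotent_of_sq _ τ hNsq hτk
  · have hsum : ∑ idx : Fin (p + q + 2), F (idx : ℕ)
        = M₁ + M₂ + q • M₃ + p • N := by
      rw [Fin.sum_univ_eq_sum_range F (p + q + 2)]
      rw [Finset.range_eq_Ico,
        ← Finset.sum_Ico_consecutive F (Nat.zero_le (q + 2)) (by omega : q + 2 ≤ p + q + 2)]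
      have e2 : ∑ r ∈ Finset.Ico 0 2, F r = M₁ + M₂ := by
        rw [← Finset.range_eq_Ico]
        rw [Finset.sum_range_succ, Finset.sum_range_one]
        rw [hF]
        norm_num
      have e3 : ∑ r ∈ Finset.Ico 2 (q + 2), F r = q • M₃ := by
        have hc3 : ∀ r ∈ Finset.Ico 2 (q + 2), F r = M₃ := by
          intro r hr
          rw [Finset.mem_Ico] at hr
          rw [hF]
          dsimp only
          rw [if_neg (by omega), if_neg (by omega), if_pos (by omega)]
        rw [Finset.sum_congr rfl hc3, Finset.sum_const, Nat.card_Ico]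
        norm_num
      have e1 : ∑ r ∈ Finset.Ico 0 (q + 2), F r = M₁ + M₂ + q • M₃ := by
        rw [← Finset.sum_Ico_consecutive F (Nat.zero_le 2) (by omega : 2 ≤ q + 2), e2, e3]
      have e4 : ∑ r ∈ Finset.Ico (q + 2) (p + q + 2), F r = p • N := by
        have hc4 : ∀ r ∈ Finset.Ico (q + 2) (p + q + 2), F r = N := by
          intro r hr
          rw [Finset.mem_Ico] at hr
          rw [hF]
          dsimp only
          rw [if_neg (by omega), if_neg (by omega), if_neg (by omega)]
        rw [Finset.sum_congr rfl hc4, Finset.sum_const, Nat.card_Ico]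
        congr 1
        omega
      rw [e1, e4]
    show A = ∑ idx : Fin (p + q + 2), F (idx : ℕ)
    rw [hsum]
    rw [← Nat.cast_smul_eq_nsmul ℂ q M₃, ← Nat.cast_smul_eq_nsmul ℂ p N]
    rw [hA, hM₁, hM₂, hM₃, hN, hlc, hmc]
    ext i j
    simp only [Matrix.add_apply, Matrix.smul_apply, vecMulVec_apply, Pi.add_apply, Pi.sub_apply,
      Pi.smul_apply, smul_eq_mul, Matrix.sub_apply]
    ring

theorem rank_one_sum_kpotent (k n : ℕ) (hk : 3 ≤ k) (hn : 2 ≤ n)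
    (ω : ℂ) (hω : ω = Complex.exp (2 * Real.pi * Complex.I / k))
    (A : Matrix (Fin n) (Fin n) ℂ) (hrank : A.rank = 1)
    (α : ℤ) (hα : 3 < α) (j : ℕ) (hj1 : 1 < j) (hjk : j < k)
    (htr : A.trace = (α : ℂ) * ω ^ j) :
    (Even α →
      ∃ E : Fin (((α - 2) / 2 + 2).toNat) → Matrix (Fin n) (Fin n) ℂ,
        (∀ i, E i ^ (k + 1) = E i) ∧ A = ∑ i, E i) ∧
    (Odd α →
      ∃ E : Fin (((α - 3) / 2 + 3).toNat) → Matrix (Fin n) (Fin n) ℂ,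
        (∀ i, E i ^ (k + 1) = E i) ∧ A = ∑ i, E i) := by
  have hk0 : (k : ℂ) ≠ 0 := Nat.cast_ne_zero.mpr (by omega)
  have hωk : ω ^ k = 1 := by
    rw [hω, ← Complex.exp_nat_mul, mul_div_cancel₀ _ hk0, Complex.exp_two_pi_mul_I]
  have hτk : (ω ^ j) ^ k = 1 := by
    rw [← pow_mul, mul_comm, pow_mul, hωk, one_pow]
  set t : ℂ := (α : ℂ) * ω ^ j with htdef
  have hω0 : ω ≠ 0 := by
    rw [hω]; exact Complex.exp_ne_zero _
  have ht0 : t ≠ 0 := by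
    apply mul_ne_zero
    · exact_mod_cast Int.cast_ne_zero.mpr (by omega)
    · exact pow_ne_zero _ hω0
  obtain ⟨u, v, hA⟩ := rank_one_decomp A hrank
  have hvu : v ⬝ᵥ u = t := by
    rw [← htr, hA]
    simp only [Matrix.trace, Matrix.diag, vecMulVec_apply, dotProduct]
    exact Finset.sum_congr rfl fun i _ => mul_comm _ _
  set c : ℂ := t⁻¹ with hcdef
  have hct : c * t = 1 := inv_mul_cancel₀ ht0
  have hAA : A * A = t • A := by
    rw [hA, vmv_mul, hvu]
  set Q : Matrix (Fin n) (Fin n) ℂ := 1 - c • A with hQdef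
  have hAQ : A * Q = 0 := by
    rw [hQdef, mul_sub, mul_one, Matrix.mul_smul, hAA, smul_smul, hct, one_smul, sub_self]
  have hQA : Q * A = 0 := by
    rw [hQdef, sub_mul, one_mul, Matrix.smul_mul, hAA, smul_smul, hct, one_smul, sub_self]
  have hQQ : Q * Q = Q := by
    nth_rewrite 2 [hQdef]
    rw [mul_sub, mul_one, Matrix.mul_smul, hQA, smul_zero, sub_zero]
  have hu : ∃ i, u i ≠ 0 := by
    by_contra h
    push_neg at h
    apply ht0
    rw [← hvu]
    simp [dotProduct, h]
  have hv : ∃ i, v i ≠ 0 := by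
    by_contra h
    push_neg at h
    apply ht0
    rw [← hvu]
    simp [dotProduct, h]
  have hQii : ∃ i, Q i i ≠ 0 := by
    by_contra h
    push_neg at h
    have h1 : Q.trace = 0 := by
      simp [Matrix.trace, Matrix.diag, h]
    rw [hQdef, trace_sub, trace_one, trace_smul, htr, smul_eq_mul, hct] at h1
    simp only [Fintype.card_fin] at h1
    have h2 : (n : ℂ) = 1 := by linear_combination h1
    have h3 : (n : ℂ) ≠ 1 := by
      exact_mod_cast (by omega : n ≠ 1)
    exact h3 h2
  obtain ⟨i₀, hQ0⟩ := hQii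
  set w : Fin n → ℂ := fun l => Q l i₀ with hwdef
  set x : Fin n → ℂ := (Q i₀ i₀)⁻¹ • fun l => Q i₀ l with hxdef
  have hvw : v ⬝ᵥ w = 0 := by
    obtain ⟨i₁, hi₁⟩ := hu
    have h2 := congrFun (congrFun hAQ i₁) i₀
    simp only [mul_apply, Matrix.zero_apply, hA, vecMulVec_apply] at h2
    have h3 : u i₁ * (v ⬝ᵥ w) = 0 := by
      rw [dotProduct, Finset.mul_sum, ← h2]
      exact Finset.sum_congr rfl fun l _ => by rw [hwdef]; ring
    exact (mul_eq_zero.mp h3).resolve_left hi₁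
  have hxu : x ⬝ᵥ u = 0 := by
    obtain ⟨j₁, hj₁⟩ := hv
    have h2 := congrFun (congrFun hQA i₀) j₁
    simp only [mul_apply, Matrix.zero_apply, hA, vecMulVec_apply] at h2
    have h3 : ((fun l => Q i₀ l) ⬝ᵥ u) * v j₁ = 0 := by
      rw [dotProduct, Finset.sum_mul, ← h2]
      exact Finset.sum_congr rfl fun l _ => by ring
    have h4 : (fun l => Q i₀ l) ⬝ᵥ u = 0 := (mul_eq_zero.mp h3).resolve_right hj₁
    rw [hxdef, smul_dotProduct, h4, smul_eq_mul, mul_zero]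
  have hxw : x ⬝ᵥ w = 1 := by
    have h2 := congrFun (congrFun hQQ i₀) i₀
    simp only [mul_apply] at h2
    have h3 : (fun l => Q i₀ l) ⬝ᵥ w = Q i₀ i₀ := by
      simpa [dotProduct] using h2
    rw [hxdef, smul_dotProduct, h3, smul_eq_mul, inv_mul_cancel₀ hQ0]
  constructor
  · rintro ⟨r, hr⟩
    have hr2 : 2 ≤ r := by omega
    set b : ℕ := r.toNat with hbdef
    have hb : α = 2 * (b : ℤ) := by omega
    rw [show ((α - 2) / 2 + 2).toNat = (b - 1) + 0 + 2 by omega]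
    apply decomp_core (ω ^ j) hτk A u v w x hA t hvu c hct hvw hxu hxw (b - 1) 0
    have hb1 : 1 ≤ b := by omega
    rw [htdef]
    have hcast : ((b : ℤ) : ℂ) = ((b - 1 : ℕ) : ℂ) + 1 := by
      push_cast [hb1]
      ring
    rw [hb]
    push_cast [hb1]
    ring
  · rintro ⟨r, hr⟩
    have hr2 : 2 ≤ r := by omega
    set b : ℕ := r.toNat with hbdef
    have hb : α = 2 * (b : ℤ) + 1 := by omega
    rw [show ((α - 3) / 2 + 3).toNat = (b - 1) + 1 + 2 by omega]
    apply decomp_core (ω ^ j) hτk A u v w x hA t hvu c hct hvw hxu hxw (b - 1) 1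
    have hb1 : 1 ≤ b := by omega
    rw [htdef, hb]
    push_cast [hb1]
    ring
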